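/- Let R₁ and R₂ be finite commutative rings such that diam(Γ(R₁)) = 1 and diam(Γ(R₂)) = 1 (i.e., each has at least two nonzero zero-divisors and any two distinct nonzero zero-divisors multiply to zero). Then the complement of the zero-divisor graph of R₁ × R₂ is not a divisor graph. -/

import Mathlib

/-- A finite simple graph is a *divisor graph* if there is an injection from its
vertices to the positive integers such that distinct vertices are adjacent iff
one label divides the other. -/
def IsDivisorGraph {V : Type*} (G : SimpleGraph V) : Prop :=
  ∃ f : V → ℕ, Function.Injective f ∧ (∀ v, 0 < f v) ∧
    ∀ u v : V, u ≠ v → (G.Adj u v ↔ f u ∣ f v ∨ f v ∣ f u)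

/-- The vertex set of the zero-divisor graph: nonzero zero-divisors of `R`. -/
abbrev ZDVertex (R : Type*) [CommRing R] : Type _ :=
  {a : R // a ≠ 0 ∧ ∃ b : R, b ≠ 0 ∧ a * b = 0}

/-- The zero-divisor graph `Γ(R)`. -/
def zeroDivisorGraph (R : Type*) [CommRing R] : SimpleGraph (ZDVertex R) where
  Adj x y := x ≠ y ∧ x.val * y.val = 0
  symm := ⟨fun x y ⟨h1, h2⟩ => ⟨h1.symm, by rwa [mul_comm]⟩⟩
  loopless := ⟨fun x ⟨h, _⟩ => h rfl⟩

/-- The complement of the zero-divisor graph `Γ(R)̄`. -/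
def compZDGraph (R : Type*) [CommRing R] : SimpleGraph (ZDVertex R) where
  Adj x y := x ≠ y ∧ x.val * y.val ≠ 0
  symm := ⟨fun x y ⟨h1, h2⟩ => ⟨h1.symm, by rwa [mul_comm]⟩⟩
  loopless := ⟨fun x ⟨h, _⟩ => h rfl⟩

/-- The arithmetic core: a forcing-chain contradiction for a 7-vertex
configuration that cannot be realized by divisibility labels. -/
lemma divisor_chain_contradiction (a b c d e p q : ℕ)
    (eAB : a ∣ b ∨ b ∣ a) (eAE : a ∣ e ∨ e ∣ a) (eBD : b ∣ d ∨ d ∣ b)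
    (eBG : b ∣ q ∨ q ∣ b) (eCF : c ∣ p ∨ p ∣ c) (eCG : c ∣ q ∨ q ∣ c)
    (eDF : d ∣ p ∨ p ∣ d) (eEF : e ∣ p ∨ p ∣ e) (eEG : e ∣ q ∨ q ∣ e)
    (nAD : ¬ a ∣ d) (nDA : ¬ d ∣ a) (nAF : ¬ a ∣ p) (nFA : ¬ p ∣ a)
    (nAG : ¬ a ∣ q) (nGA : ¬ q ∣ a) (nBC : ¬ b ∣ c) (nCB : ¬ c ∣ b)
    (nBF : ¬ b ∣ p) (nFB : ¬ p ∣ b) (nCD : ¬ c ∣ d) (nDC : ¬ d ∣ c)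
    (nCE : ¬ c ∣ e) (nEC : ¬ e ∣ c) : False := by
  rcases eAB with hab | hba
  · have hDB : d ∣ b := eBD.resolve_left fun h => nAD (hab.trans h)
    have hDF : d ∣ p := eDF.resolve_right fun h => nFB (h.trans hDB)
    have hCF : c ∣ p := eCF.resolve_right fun h => nDC (hDF.trans h)
    have hEF : e ∣ p := eEF.resolve_right fun h => nCE (hCF.trans h)
    have hEA : e ∣ a := eAE.resolve_left fun h => nAF (h.trans hEF)
    have hEG : e ∣ q := eEG.resolve_right fun h => nGA (h.trans hEA)
    have hCG : c ∣ q := eCG.resolve_right fun h => nEC (hEG.trans h)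
    have hBG : b ∣ q := eBG.resolve_right fun h => nCB (hCG.trans h)
    exact nAG (hab.trans hBG)
  · have hBD : b ∣ d := eBD.resolve_right fun h => nDA (h.trans hba)
    have hFD : p ∣ d := eDF.resolve_left fun h => nBF (hBD.trans h)
    have hFC : p ∣ c := eCF.resolve_left fun h => nCD (h.trans hFD)
    have hFE : p ∣ e := eEF.resolve_left fun h => nEC (h.trans hFC)
    have hAE : a ∣ e := eAE.resolve_right fun h => nFA (hFE.trans h)
    have hGE : q ∣ e := eEG.resolve_left fun h => nAG (hAE.trans h)
    have hGC : q ∣ c := eCG.resolve_left fun h => nCE (h.trans hGE)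
    have hGB : q ∣ b := eBG.resolve_left fun h => nBC (h.trans hGC)
    exact nGA (hGB.trans hba)

theorem compZDGraph_prod_diamOne_not_divisorGraph (R₁ R₂ : Type*) [CommRing R₁] [Fintype R₁]
    [CommRing R₂] [Fintype R₂]
    (h₁ : ∃ x y : R₁, x ≠ y ∧ (x ≠ 0 ∧ ∃ c ≠ 0, x * c = 0) ∧ (y ≠ 0 ∧ ∃ c ≠ 0, y * c = 0))
    (h₁' : ∀ x y : R₁, x ≠ 0 → (∃ c ≠ 0, x * c = 0) → y ≠ 0 → (∃ c ≠ 0, y * c = 0) →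
      x ≠ y → x * y = 0)
    (h₂ : ∃ x y : R₂, x ≠ y ∧ (x ≠ 0 ∧ ∃ c ≠ 0, x * c = 0) ∧ (y ≠ 0 ∧ ∃ c ≠ 0, y * c = 0))
    (h₂' : ∀ x y : R₂, x ≠ 0 → (∃ c ≠ 0, x * c = 0) → y ≠ 0 → (∃ c ≠ 0, y * c = 0) →
      x ≠ y → x * y = 0) :
    ¬ IsDivisorGraph (compZDGraph (R₁ × R₂)) := by
  rintro ⟨f, -, -, hiff⟩
  obtain ⟨x, y, hxy, ⟨hx0, hxann⟩, ⟨hy0, hyann⟩⟩ := h₁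
  obtain ⟨u, v, huv, ⟨hu0, huann⟩, ⟨hv0, hvann⟩⟩ := h₂
  have hxy0 : x * y = 0 := h₁' x y hx0 hxann hy0 hyann hxy
  have huv0 : u * v = 0 := h₂' u v hu0 huann hv0 hvann huv
  have h101 : (1 : R₁) ≠ 0 := fun h => hx0 (by rw [← mul_one x, h, mul_zero])
  have h102 : (1 : R₂) ≠ 0 := fun h => hu0 (by rw [← mul_one u, h, mul_zero])
  have hx1 : x ≠ 1 := by
    rintro rfl; obtain ⟨c, hc, hc0⟩ := hxann; exact hc (by rwa [one_mul] at hc0)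
  have hy1 : y ≠ 1 := by
    rintro rfl; obtain ⟨c, hc, hc0⟩ := hyann; exact hc (by rwa [one_mul] at hc0)
  have hu1 : u ≠ 1 := by
    rintro rfl; obtain ⟨c, hc, hc0⟩ := huann; exact hc (by rwa [one_mul] at hc0)
  have hv1 : v ≠ 1 := by
    rintro rfl; obtain ⟨c, hc, hc0⟩ := hvann; exact hc (by rwa [one_mul] at hc0)
  -- the seven vertices
  set vA : ZDVertex (R₁ × R₂) := ⟨((0 : R₁), u),
    by simp [Prod.mk_eq_zero, hu0], ((1 : R₁), v),
    by simp [Prod.mk_eq_zero, h101], by simp [Prod.mk_mul_mk, Prod.mk_eq_zero, huv0]⟩ with hvA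
  set vB : ZDVertex (R₁ × R₂) := ⟨((0 : R₁), (1 : R₂)),
    by simp [Prod.mk_eq_zero, h102], (x, (0 : R₂)),
    by simp [Prod.mk_eq_zero, hx0], by simp [Prod.mk_mul_mk, Prod.mk_eq_zero]⟩ with hvB
  set vC : ZDVertex (R₁ × R₂) := ⟨(x, (0 : R₂)),
    by simp [Prod.mk_eq_zero, hx0], (y, (1 : R₂)),
    by simp [Prod.mk_eq_zero, hy0], by simp [Prod.mk_mul_mk, Prod.mk_eq_zero, hxy0]⟩ with hvC
  set vD : ZDVertex (R₁ × R₂) := ⟨(y, v),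
    by simp [Prod.mk_eq_zero, hy0], (x, u),
    by simp [Prod.mk_eq_zero, hx0],
    by simp [Prod.mk_mul_mk, Prod.mk_eq_zero, mul_comm y x, mul_comm v u, hxy0, huv0]⟩ with hvD
  set vE : ZDVertex (R₁ × R₂) := ⟨(y, (1 : R₂)),
    by simp [Prod.mk_eq_zero, hy0], (x, (0 : R₂)),
    by simp [Prod.mk_eq_zero, hx0],
    by simp [Prod.mk_mul_mk, Prod.mk_eq_zero, mul_comm y x, hxy0]⟩ with hvE
  set vF : ZDVertex (R₁ × R₂) := ⟨((1 : R₁), (0 : R₂)),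
    by simp [Prod.mk_eq_zero, h101], ((0 : R₁), (1 : R₂)),
    by simp [Prod.mk_eq_zero, h102], by simp [Prod.mk_mul_mk, Prod.mk_eq_zero]⟩ with hvF
  set vG : ZDVertex (R₁ × R₂) := ⟨((1 : R₁), v),
    by simp [Prod.mk_eq_zero, h101], ((0 : R₁), u),
    by simp [Prod.mk_eq_zero, hu0],
    by simp [Prod.mk_mul_mk, Prod.mk_eq_zero, mul_comm v u, huv0]⟩ with hvG
  -- distinctness
  have neAB : vA ≠ vB := fun h => hu1 (congrArg (fun z => z.val.2) h)
  have neAD : vA ≠ vD := fun h => hy0 (congrArg (fun z => z.val.1) h).symm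
  have neAE : vA ≠ vE := fun h => hy0 (congrArg (fun z => z.val.1) h).symm
  have neAF : vA ≠ vF := fun h => h101 (congrArg (fun z => z.val.1) h).symm
  have neAG : vA ≠ vG := fun h => h101 (congrArg (fun z => z.val.1) h).symm
  have neBC : vB ≠ vC := fun h => hx0 (congrArg (fun z => z.val.1) h).symm
  have neBD : vB ≠ vD := fun h => hy0 (congrArg (fun z => z.val.1) h).symm
  have neBF : vB ≠ vF := fun h => h101 (congrArg (fun z => z.val.1) h).symm
  have neBG : vB ≠ vG := fun h => h101 (congrArg (fun z => z.val.1) h).symm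
  have neCD : vC ≠ vD := fun h => hxy (congrArg (fun z => z.val.1) h)
  have neCE : vC ≠ vE := fun h => hxy (congrArg (fun z => z.val.1) h)
  have neCF : vC ≠ vF := fun h => hx1 (congrArg (fun z => z.val.1) h)
  have neCG : vC ≠ vG := fun h => hx1 (congrArg (fun z => z.val.1) h)
  have neDF : vD ≠ vF := fun h => hy1 (congrArg (fun z => z.val.1) h)
  have neEF : vE ≠ vF := fun h => hy1 (congrArg (fun z => z.val.1) h)
  have neEG : vE ≠ vG := fun h => hy1 (congrArg (fun z => z.val.1) h)
  -- adjacency helpers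
  have adjOf : ∀ p q : ZDVertex (R₁ × R₂), p ≠ q → p.val * q.val ≠ 0 →
      f p ∣ f q ∨ f q ∣ f p := fun p q h h2 => (hiff p q h).mp ⟨h, h2⟩
  have nadjL : ∀ p q : ZDVertex (R₁ × R₂), p ≠ q → p.val * q.val = 0 →
      ¬ f p ∣ f q := fun p q h h2 hd => ((hiff p q h).mpr (Or.inl hd)).2 h2
  have nadjR : ∀ p q : ZDVertex (R₁ × R₂), p ≠ q → p.val * q.val = 0 →
      ¬ f q ∣ f p := fun p q h h2 hd => ((hiff p q h).mpr (Or.inr hd)).2 h2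
  -- edges
  have eAB := adjOf vA vB neAB (by simp [hvA, hvB, Prod.mk_mul_mk, Prod.mk_eq_zero, hu0])
  have eAE := adjOf vA vE neAE (by simp [hvA, hvE, Prod.mk_mul_mk, Prod.mk_eq_zero, hu0])
  have eBD := adjOf vB vD neBD (by simp [hvB, hvD, Prod.mk_mul_mk, Prod.mk_eq_zero, hv0])
  have eBG := adjOf vB vG neBG (by simp [hvB, hvG, Prod.mk_mul_mk, Prod.mk_eq_zero, hv0])
  have eCF := adjOf vC vF neCF (by simp [hvC, hvF, Prod.mk_mul_mk, Prod.mk_eq_zero, hx0])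
  have eCG := adjOf vC vG neCG (by simp [hvC, hvG, Prod.mk_mul_mk, Prod.mk_eq_zero, hx0])
  have eDF := adjOf vD vF neDF (by simp [hvD, hvF, Prod.mk_mul_mk, Prod.mk_eq_zero, hy0])
  have eEF := adjOf vE vF neEF (by simp [hvE, hvF, Prod.mk_mul_mk, Prod.mk_eq_zero, hy0])
  have eEG := adjOf vE vG neEG (by simp [hvE, hvG, Prod.mk_mul_mk, Prod.mk_eq_zero, hy0])
  -- non-edges
  have zAD : vA.val * vD.val = 0 := by simp [hvA, hvD, Prod.mk_mul_mk, Prod.mk_eq_zero, huv0]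
  have zAF : vA.val * vF.val = 0 := by simp [hvA, hvF, Prod.mk_mul_mk, Prod.mk_eq_zero]
  have zAG : vA.val * vG.val = 0 := by simp [hvA, hvG, Prod.mk_mul_mk, Prod.mk_eq_zero, huv0]
  have zBC : vB.val * vC.val = 0 := by simp [hvB, hvC, Prod.mk_mul_mk, Prod.mk_eq_zero]
  have zBF : vB.val * vF.val = 0 := by simp [hvB, hvF, Prod.mk_mul_mk, Prod.mk_eq_zero]
  have zCD : vC.val * vD.val = 0 := by simp [hvC, hvD, Prod.mk_mul_mk, Prod.mk_eq_zero, hxy0]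
  have zCE : vC.val * vE.val = 0 := by simp [hvC, hvE, Prod.mk_mul_mk, Prod.mk_eq_zero, hxy0]
  exact divisor_chain_contradiction (f vA) (f vB) (f vC) (f vD) (f vE) (f vF) (f vG)
    eAB eAE eBD eBG eCF eCG eDF eEF eEG
    (nadjL vA vD neAD zAD) (nadjR vA vD neAD zAD)
    (nadjL vA vF neAF zAF) (nadjR vA vF neAF zAF)
    (nadjL vA vG neAG zAG) (nadjR vA vG neAG zAG)
    (nadjL vB vC neBC zBC) (nadjR vB vC neBC zBC)
    (nadjL vB vF neBF zBF) (nadjR vB vF neBF zBF)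
    (nadjL vC vD neCD zCD) (nadjR vC vD neCD zCD)
    (nadjL vC vE neCE zCE) (nadjR vC vE neCE zCE)
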